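/- arXiv:2212.11797 — 6 statements merged into one kernel-verified Lean document; each statement's English description precedes it below -/
import Mathlib

section
/- For every integer n ≥ 1, the multiplication map (P, U) ↦ P * U is a homeomorphism from the product of the set of positive definite Hermitian n×n complex matrices (with its subspace topology) and the unitary group U(n) onto the group GL(n, ℂ) of invertible n×n complex matrices. (Topological form of Lemma 3.4(i).) -/
open scoped ComplexOrder
open Filter Topology Matrix

namespace Matrix.PosSemidef

open scoped MatrixOrder

noncomputable def sqrt {m : Type*} [Fintype m] [DecidableEq m] {A : Matrix m m ℂ}
    (_hA : A.PosSemidef) : Matrix m m ℂ :=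
  CFC.sqrt A

lemma posSemidef_sqrt {m : Type*} [Fintype m] [DecidableEq m] {A : Matrix m m ℂ}
    (hA : A.PosSemidef) : hA.sqrt.PosSemidef :=
  Matrix.nonneg_iff_posSemidef.mp (CFC.sqrt_nonneg A)

lemma sqrt_mul_self {m : Type*} [Fintype m] [DecidableEq m] {A : Matrix m m ℂ}
    (hA : A.PosSemidef) : hA.sqrt * hA.sqrt = A :=
  CFC.sqrt_mul_sqrt_self A hA.nonneg

lemma eq_sqrt_of_sq_eq {m : Type*} [Fintype m] [DecidableEq m] {A : Matrix m m ℂ}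
    (hA : A.PosSemidef) {B : Matrix m m ℂ} (hB : B.PosSemidef) (h : A ^ 2 = B) :
    A = hB.sqrt :=
  (CFC.sqrt_unique (by rw [← sq]; exact h) hA.nonneg).symm

end Matrix.PosSemidef

namespace PolarAux

variable {n : ℕ}

lemma posSemidef_of_tendsto {u : ℕ → Matrix (Fin n) (Fin n) ℂ} {B : Matrix (Fin n) (Fin n) ℂ}
    (hu : ∀ k, (u k).PosSemidef) (h : Tendsto u atTop (𝓝 B)) : B.PosSemidef := by
  haveI := Complex.orderClosedTopology
  rw [Matrix.posSemidef_iff_dotProduct_mulVec]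
  constructor
  · have h1 : Tendsto (fun k => (u k)ᴴ) atTop (𝓝 Bᴴ) :=
      ((Continuous.matrix_conjTranspose continuous_id).tendsto B).comp h
    have he : (fun k => (u k)ᴴ) = u := funext fun k => (hu k).1
    rw [he] at h1
    exact tendsto_nhds_unique h1 h
  · intro x
    have hc : Tendsto (fun k => dotProduct (star x) (u k *ᵥ x)) atTop
        (𝓝 (dotProduct (star x) (B *ᵥ x))) :=
      ((continuous_const.dotProduct (continuous_id.matrix_mulVec continuous_const)).tendsto
        B).comp h
    exact le_of_tendsto_of_tendsto tendsto_const_nhds hc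
      (Filter.Eventually.of_forall fun k => (hu k).dotProduct_mulVec_nonneg x)

lemma norm_entry_le {P A : Matrix (Fin n) (Fin n) ℂ} (hP : P.IsHermitian) (hPA : P * P = A)
    (i j : Fin n) : ‖P i j‖ ≤ Real.sqrt (A i i).re := by
  have h1 : A i i = ((∑ k, Complex.normSq (P i k) : ℝ) : ℂ) := by
    rw [← hPA, Matrix.mul_apply]
    push_cast
    refine Finset.sum_congr rfl fun k _ => ?_
    have hk : P k i = (starRingEnd ℂ) (P i k) := by
      conv_lhs => rw [← hP]
      rfl
    rw [hk, Complex.mul_conj]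
  have h2 : Complex.normSq (P i j) ≤ (A i i).re := by
    rw [h1, Complex.ofReal_re]
    exact Finset.single_le_sum (fun k _ => Complex.normSq_nonneg _) (Finset.mem_univ j)
  calc ‖P i j‖ = Real.sqrt (Complex.normSq (P i j)) := by
        rw [Complex.norm_def]
    _ ≤ Real.sqrt (A i i).re := Real.sqrt_le_sqrt h2

lemma tendsto_sqrt {u : ℕ → Matrix (Fin n) (Fin n) ℂ} {B : Matrix (Fin n) (Fin n) ℂ}
    (hu : ∀ k, (u k).PosSemidef) (hB : B.PosSemidef) (h : Tendsto u atTop (𝓝 B)) :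
    Tendsto (fun k => (hu k).sqrt) atTop (𝓝 hB.sqrt) := by
  have hbd : ∀ i : Fin n, ∃ c : ℝ, ∀ k, (u k i i).re ≤ c := by
    intro i
    have hev : Continuous fun M : Matrix (Fin n) (Fin n) ℂ => M i i :=
      continuous_apply_apply i i
    have ht : Tendsto (fun k => (u k i i).re) atTop (𝓝 (B i i).re) :=
      (Complex.continuous_re.tendsto _).comp ((hev.tendsto B).comp h)
    obtain ⟨c, hc⟩ := ht.bddAbove_range
    exact ⟨c, fun k => hc (Set.mem_range_self k)⟩
  choose c hc using hbd
  set C : ℝ := ∑ i, max (c i) 0 with hC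
  have hCle : ∀ i k, (u k i i).re ≤ C := by
    intro i k
    calc (u k i i).re ≤ c i := hc i k
      _ ≤ max (c i) 0 := le_max_left _ _
      _ ≤ C := Finset.single_le_sum (fun j _ => le_max_right (c j) 0) (Finset.mem_univ i)
  set S : Set (Matrix (Fin n) (Fin n) ℂ) :=
    Set.univ.pi fun _ : Fin n => Set.univ.pi fun _ : Fin n => Metric.closedBall (0 : ℂ)
      (Real.sqrt C) with hS
  have hScompact : IsCompact S :=
    isCompact_univ_pi fun _ => isCompact_univ_pi fun _ => isCompact_closedBall _ _
  have hmem : ∀ k, (hu k).sqrt ∈ S := by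
    intro k
    refine Set.mem_pi.mpr fun i _ => Set.mem_pi.mpr fun j _ => ?_
    rw [Metric.mem_closedBall, dist_zero_right]
    refine (norm_entry_le (hu k).posSemidef_sqrt.1 (hu k).sqrt_mul_self i j).trans ?_
    exact Real.sqrt_le_sqrt (hCle i k)
  haveI : FirstCountableTopology (Matrix (Fin n) (Fin n) ℂ) :=
    inferInstanceAs (FirstCountableTopology (Fin n → Fin n → ℂ))
  refine tendsto_of_subseq_tendsto fun ns hns => ?_
  obtain ⟨Q, -, ms, hms, hQ⟩ := hScompact.tendsto_subseq fun k => hmem (ns k)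
  refine ⟨ms, ?_⟩
  have hsub : Tendsto (fun k => u (ns (ms k))) atTop (𝓝 B) :=
    h.comp (hns.comp hms.tendsto_atTop)
  have hQpsd : Q.PosSemidef :=
    posSemidef_of_tendsto (fun k => (hu (ns (ms k))).posSemidef_sqrt) hQ
  have hsq : Q * Q = B := by
    refine tendsto_nhds_unique (((continuous_id.matrix_mul continuous_id).tendsto Q).comp hQ) ?_
    have he : (fun k => (hu (ns (ms k))).sqrt * (hu (ns (ms k))).sqrt)
        = fun k => u (ns (ms k)) := funext fun k => (hu (ns (ms k))).sqrt_mul_self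
    show Tendsto (fun k => (hu (ns (ms k))).sqrt * (hu (ns (ms k))).sqrt) atTop (𝓝 B)
    rw [he]; exact hsub
  have hQeq : Q = hB.sqrt := hQpsd.eq_sqrt_of_sq_eq hB (by rw [sq]; exact hsq)
  rw [← hQeq]
  exact hQ

lemma posDef_of_psd_of_det_ne_zero {A : Matrix (Fin n) (Fin n) ℂ} (hA : A.PosSemidef)
    (h : A.det ≠ 0) : A.PosDef := by
  refine Matrix.posDef_iff_dotProduct_mulVec.mpr ⟨hA.1, fun x hx => lt_of_le_of_ne (hA.dotProduct_mulVec_nonneg x) (Ne.symm fun h0 => hx ?_)⟩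
  have hz : A *ᵥ x = 0 := (hA.dotProduct_mulVec_zero_iff x).mp h0
  have := congrArg (fun v => A⁻¹ *ᵥ v) hz
  simpa [Matrix.mulVec_mulVec, Matrix.nonsing_inv_mul A (isUnit_iff_ne_zero.mpr h)] using this

/-- The positive part of the polar decomposition. -/
noncomputable def sqrtTTH (T : Matrix (Fin n) (Fin n) ℂ) : Matrix (Fin n) (Fin n) ℂ :=
  (Matrix.posSemidef_self_mul_conjTranspose T).sqrt

lemma sqrtTTH_posSemidef (T : Matrix (Fin n) (Fin n) ℂ) : (sqrtTTH T).PosSemidef :=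
  (Matrix.posSemidef_self_mul_conjTranspose T).posSemidef_sqrt

lemma sqrtTTH_mul_self (T : Matrix (Fin n) (Fin n) ℂ) : sqrtTTH T * sqrtTTH T = T * Tᴴ :=
  (Matrix.posSemidef_self_mul_conjTranspose T).sqrt_mul_self

lemma sqrtTTH_det_ne_zero {T : Matrix (Fin n) (Fin n) ℂ} (hT : IsUnit T.det) :
    (sqrtTTH T).det ≠ 0 := by
  have hTT : (T * Tᴴ).det ≠ 0 := by
    rw [Matrix.det_mul, Matrix.det_conjTranspose]
    exact mul_ne_zero hT.ne_zero (star_ne_zero.mpr hT.ne_zero)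
  have : (sqrtTTH T).det * (sqrtTTH T).det = (T * Tᴴ).det := by
    rw [← Matrix.det_mul, sqrtTTH_mul_self]
  intro h0
  rw [h0, mul_zero] at this
  exact hTT this.symm

lemma sqrtTTH_posDef {T : Matrix (Fin n) (Fin n) ℂ} (hT : IsUnit T.det) :
    (sqrtTTH T).PosDef :=
  posDef_of_psd_of_det_ne_zero (sqrtTTH_posSemidef T) (sqrtTTH_det_ne_zero hT)

lemma sqrtTTH_inv_mul_mem_unitary {T : Matrix (Fin n) (Fin n) ℂ} (hT : IsUnit T.det) :
    (sqrtTTH T)⁻¹ * T ∈ Matrix.unitaryGroup (Fin n) ℂ := by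
  set P := sqrtTTH T with hPdef
  have hdet : IsUnit P.det := isUnit_iff_ne_zero.mpr (sqrtTTH_det_ne_zero hT)
  have hH : Pᴴ = P := (sqrtTTH_posSemidef T).1
  rw [Matrix.mem_unitaryGroup_iff]
  have hstar : star (P⁻¹ * T) = Tᴴ * P⁻¹ := by
    rw [Matrix.star_eq_conjTranspose, Matrix.conjTranspose_mul,
      Matrix.conjTranspose_nonsing_inv, hH]
  rw [hstar]
  calc P⁻¹ * T * (Tᴴ * P⁻¹) = P⁻¹ * (T * Tᴴ) * P⁻¹ := by simp only [Matrix.mul_assoc]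
    _ = P⁻¹ * (P * P) * P⁻¹ := by rw [sqrtTTH_mul_self]
    _ = P⁻¹ * P * (P * P⁻¹) := by simp only [Matrix.mul_assoc]
    _ = 1 := by rw [Matrix.nonsing_inv_mul _ hdet, Matrix.mul_nonsing_inv _ hdet, one_mul]

lemma isUnit_det_of_unitary {U : Matrix (Fin n) (Fin n) ℂ}
    (hU : U ∈ Matrix.unitaryGroup (Fin n) ℂ) : IsUnit U.det := by
  have h1 : U * star U = 1 := Matrix.mem_unitaryGroup_iff.mp hU
  exact IsUnit.of_mul_eq_one (star U).det (by rw [← Matrix.det_mul, h1, Matrix.det_one])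

lemma sqrtTTH_mul_eq {P U : Matrix (Fin n) (Fin n) ℂ} (hP : P.PosDef)
    (hU : U ∈ Matrix.unitaryGroup (Fin n) ℂ) : sqrtTTH (P * U) = P := by
  have hUU : U * star U = 1 := Matrix.mem_unitaryGroup_iff.mp hU
  have hTT : (P * U) * (P * U)ᴴ = P * P := by
    rw [Matrix.conjTranspose_mul, ← Matrix.star_eq_conjTranspose U]
    calc P * U * (star U * Pᴴ) = P * (U * star U) * Pᴴ := by simp only [Matrix.mul_assoc]
      _ = P * P := by rw [hUU, Matrix.mul_one, hP.1]
  exact (hP.posSemidef.eq_sqrt_of_sq_eq (Matrix.posSemidef_self_mul_conjTranspose (P * U))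
    (by rw [sq]; exact hTT.symm)).symm

end PolarAux

open PolarAux

/-- **Topological polar decomposition** (Lemma 3.4(i)): the multiplication map
`(P, U) ↦ P * U` is a homeomorphism from the product of the space of positive definite
Hermitian `n × n` complex matrices and the unitary group `U(n)` onto the space of
invertible `n × n` complex matrices (each with its subspace topology). -/
theorem polar_decomposition_homeomorph (n : ℕ) (hn : 1 ≤ n) :
    ∃ h : ({P : Matrix (Fin n) (Fin n) ℂ // P.PosDef} × Matrix.unitaryGroup (Fin n) ℂ) ≃ₜ
        {T : Matrix (Fin n) (Fin n) ℂ // IsUnit T.det},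
      ∀ (P : {P : Matrix (Fin n) (Fin n) ℂ // P.PosDef})
        (U : Matrix.unitaryGroup (Fin n) ℂ),
        (h (P, U) : Matrix (Fin n) (Fin n) ℂ) =
          (P : Matrix (Fin n) (Fin n) ℂ) * (U : Matrix (Fin n) (Fin n) ℂ) := by
  haveI : FirstCountableTopology (Matrix (Fin n) (Fin n) ℂ) :=
    inferInstanceAs (FirstCountableTopology (Fin n → Fin n → ℂ))
  set X := {P : Matrix (Fin n) (Fin n) ℂ // P.PosDef}
  set G := Matrix.unitaryGroup (Fin n) ℂ
  set Y := {T : Matrix (Fin n) (Fin n) ℂ // IsUnit T.det}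
  -- the forward map
  have fwd_det : ∀ (P : X) (U : G), IsUnit ((P.1 * U.1).det) := by
    intro P U
    rw [Matrix.det_mul]
    exact (isUnit_iff_ne_zero.mpr P.2.det_pos.ne').mul (isUnit_det_of_unitary U.2)
  let fwd : X × G → Y := fun p => ⟨p.1.1 * p.2.1, fwd_det p.1 p.2⟩
  -- the backward map
  let bwd : Y → X × G := fun T =>
    (⟨sqrtTTH T.1, sqrtTTH_posDef T.2⟩, ⟨(sqrtTTH T.1)⁻¹ * T.1, sqrtTTH_inv_mul_mem_unitary T.2⟩)
  have hleft : Function.LeftInverse bwd fwd := by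
    rintro ⟨P, U⟩
    have hPU : sqrtTTH (P.1 * U.1) = P.1 := sqrtTTH_mul_eq P.2 U.2
    have hdet : IsUnit P.1.det := isUnit_iff_ne_zero.mpr P.2.det_pos.ne'
    refine Prod.ext (Subtype.ext ?_) (Subtype.ext ?_)
    · exact hPU
    · show (sqrtTTH (P.1 * U.1))⁻¹ * (P.1 * U.1) = U.1
      rw [hPU, Matrix.nonsing_inv_mul_cancel_left _ _ hdet]
  have hright : Function.RightInverse bwd fwd := by
    rintro ⟨T, hT⟩
    refine Subtype.ext ?_
    show sqrtTTH T * ((sqrtTTH T)⁻¹ * T) = T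
    rw [Matrix.mul_nonsing_inv_cancel_left _ _
      (isUnit_iff_ne_zero.mpr (sqrtTTH_det_ne_zero hT))]
  -- continuity of the two maps
  have hfwd_cont : Continuous fwd :=
    Continuous.subtype_mk
      ((continuous_subtype_val.comp continuous_fst).matrix_mul
        (continuous_subtype_val.comp continuous_snd)) _
  have hm1 : Continuous fun T : Y => sqrtTTH T.1 := by
    refine SeqContinuous.continuous ?_
    intro x p hx
    have hval : Tendsto (fun k => (x k).1) atTop (𝓝 p.1) :=
      (continuous_subtype_val.tendsto p).comp hx
    have hTT : Tendsto (fun k => (x k).1 * ((x k).1)ᴴ) atTop (𝓝 (p.1 * (p.1)ᴴ)) :=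
      ((continuous_id.matrix_mul (continuous_id.matrix_conjTranspose)).tendsto p.1).comp hval
    exact tendsto_sqrt (fun k => Matrix.posSemidef_self_mul_conjTranspose (x k).1)
      (Matrix.posSemidef_self_mul_conjTranspose p.1) hTT
  have hinv : Continuous fun T : Y => (sqrtTTH T.1)⁻¹ := by
    rw [continuous_iff_continuousAt]
    intro T₀
    have hdet : IsUnit (sqrtTTH T₀.1).det :=
      isUnit_iff_ne_zero.mpr (sqrtTTH_det_ne_zero T₀.2)
    have hri : ContinuousAt Ring.inverse (sqrtTTH T₀.1).det :=
      hdet.unit_spec ▸ NormedRing.inverse_continuousAt hdet.unit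
    show ContinuousAt (Inv.inv ∘ fun T : Y => sqrtTTH T.1) T₀
    exact ContinuousAt.comp (continuousAt_matrix_inv (sqrtTTH T₀.1) hri) hm1.continuousAt
  have hbwd_cont : Continuous bwd := by
    refine Continuous.prodMk (hm1.subtype_mk _) ?_
    exact (hinv.matrix_mul continuous_subtype_val).subtype_mk _
  exact ⟨⟨⟨fwd, bwd, hleft, hright⟩, hfwd_cont, hbwd_cont⟩, fun P U => rfl⟩
end

section
/- For every integer n ≥ 1, there is a homeomorphism from the set of Hermitian n×n complex matrices (with its subspace topology) onto the set of positive definite Hermitian n×n complex matrices (with its subspace topology) whose underlying map is the matrix exponential M ↦ exp(M). (Topological form of the claim in Definition 3.3 that exponentiation is a diffeomorphism with inverse i·log.) -/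
open scoped ComplexOrder

namespace ExpHomeoAux

open scoped Matrix.Norms.L2Operator MatrixOrder

variable {n : ℕ}

local notation "Mat" => Matrix (Fin n) (Fin n) ℂ

noncomputable def matCStar : CStarAlgebra Mat :=
  { (inferInstance : NormedRing Mat), (inferInstance : StarRing Mat),
    (inferInstance : CStarRing Mat), (inferInstance : NormedAlgebra ℂ Mat),
    (inferInstance : StarModule ℂ Mat), (inferInstance : CompleteSpace Mat) with }

section
attribute [local instance] matCStar

lemma exp_c_eq_r (A : Mat) : NormedSpace.exp A = NormedSpace.exp A :=
  rfl

lemma exp_eq_cfc (A : Mat) (hA : IsSelfAdjoint A) :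
    NormedSpace.exp A = cfc Real.exp A := by
  rw [exp_c_eq_r, ← CFC.real_exp_eq_normedSpace_exp]

lemma posDef_of_spectrum_pos (A : Mat) (hA : A.IsHermitian)
    (h : ∀ x ∈ spectrum ℝ A, 0 < x) : A.PosDef := by
  exact hA.posDef_iff_eigenvalues_pos.2 fun i =>
    h _ (hA.eigenvalues_mem_spectrum_real i)

lemma spectrum_pos_of_posDef {A : Mat} (hA : A.PosDef) :
    ∀ x ∈ spectrum ℝ A, 0 < x := by
  rw [hA.1.spectrum_real_eq_range_eigenvalues]
  rintro - ⟨i, rfl⟩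
  exact hA.eigenvalues_pos i

lemma exp_posDef (A : Mat) (hA : A.IsHermitian) :
    (NormedSpace.exp A).PosDef := by
  refine posDef_of_spectrum_pos _ ?_ ?_
  · exact (exp_eq_cfc A hA) ▸ (cfc_predicate Real.exp A : IsSelfAdjoint _)
  · rw [exp_eq_cfc A hA, cfc_map_spectrum Real.exp A]
    rintro - ⟨x, -, rfl⟩
    exact Real.exp_pos x

lemma log_exp_eq (A : Mat) (hA : A.IsHermitian) :
    CFC.log (NormedSpace.exp A) = A := by
  rw [exp_c_eq_r]; exact CFC.log_exp A

lemma exp_log_eq {A : Mat} (hA : A.PosDef) :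
    NormedSpace.exp (CFC.log A) = A := by
  rw [exp_c_eq_r]; exact CFC.exp_log A hA.isStrictlyPositive

lemma sub_smul_one_eq_cfc (q : Mat) (hq : IsSelfAdjoint q) (c : ℝ) :
    q - c • 1 = cfc (fun x : ℝ => x - c) q := by
  rw [cfc_sub _ _ q, cfc_id' ℝ q, cfc_const c q, Algebra.algebraMap_eq_smul_one]

lemma abs_sub_le_of_mem_spectrum (q : Mat) (hq : IsSelfAdjoint q) (c : ℝ)
    {μ : ℝ} (hμ : μ ∈ spectrum ℝ q) : |μ - c| ≤ ‖q - c • 1‖ := by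
  rw [sub_smul_one_eq_cfc q hq c]
  simpa using norm_apply_le_norm_cfc (fun x : ℝ => x - c) q hμ

lemma norm_log_le (q : Mat) (hq : IsSelfAdjoint q) {C : ℝ} (hC : 0 ≤ C)
    (h : ∀ x ∈ spectrum ℝ q, |Real.log x| ≤ C) : ‖CFC.log q‖ ≤ C :=
  norm_cfc_le hC (by simpa using h)

/-- Continuity of the matrix logarithm on positive definite matrices. -/
lemma continuous_log (hn : 1 ≤ n) :
    Continuous (fun P : {A : Mat // A.PosDef} =>
      (⟨CFC.log (P : Mat), (IsSelfAdjoint.log : IsSelfAdjoint _)⟩ :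
        {A : Mat // A.IsHermitian})) := by
  haveI : Nonempty (Fin n) := ⟨⟨0, hn⟩⟩
  rw [continuous_iff_seqContinuous]
  intro Pk P0 hPk
  rw [tendsto_subtype_rng]
  set p : Mat := (P0 : Mat) with hp_def
  have hp : p.PosDef := P0.2
  have hTends : Filter.Tendsto (fun k => (Pk k : Mat)) Filter.atTop (nhds p) :=
    ((continuous_subtype_val.tendsto P0).comp hPk)
  -- eigenvalue bounds for p
  set m₀ : ℝ := Finset.univ.inf' Finset.univ_nonempty hp.1.eigenvalues with hm₀
  set M₀ : ℝ := Finset.univ.sup' Finset.univ_nonempty hp.1.eigenvalues with hM₀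
  have hm₀pos : 0 < m₀ := by
    rw [hm₀, Finset.lt_inf'_iff]
    exact fun i _ => hp.eigenvalues_pos i
  have hmM : m₀ ≤ M₀ := by
    obtain ⟨i⟩ : Nonempty (Fin n) := inferInstance
    exact le_trans (Finset.inf'_le _ (Finset.mem_univ i))
      (Finset.le_sup' _ (Finset.mem_univ i))
  have hspec_p : ∀ μ ∈ spectrum ℝ p, m₀ ≤ μ ∧ μ ≤ M₀ := by
    rw [hp.1.spectrum_real_eq_range_eigenvalues]
    rintro - ⟨i, rfl⟩
    exact ⟨Finset.inf'_le _ (Finset.mem_univ i), Finset.le_sup' _ (Finset.mem_univ i)⟩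
  set c : ℝ := (m₀ + M₀) / 2 with hc
  set r : ℝ := (M₀ - m₀) / 2 with hr
  have hpnorm : ‖p - c • 1‖ ≤ r := by
    rw [sub_smul_one_eq_cfc p hp.1 c]
    refine norm_cfc_le (by rw [hr]; linarith) fun x hx => ?_
    obtain ⟨h1, h2⟩ := hspec_p x hx
    rw [Real.norm_eq_abs, abs_le]
    constructor <;> [skip; skip] <;> simp only [hc, hr] <;> linarith
  -- spectra of nearby hermitian matrices
  have key2 : ∀ q : Mat, IsSelfAdjoint q → ‖q - p‖ ≤ m₀ / 2 →
      ∀ μ ∈ spectrum ℝ q, m₀ / 2 ≤ μ ∧ μ ≤ M₀ + m₀ / 2 := by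
    intro q hq hqp μ hμ
    have h1 : |μ - c| ≤ ‖q - c • 1‖ := abs_sub_le_of_mem_spectrum q hq c hμ
    have h2 : ‖q - c • 1‖ ≤ ‖p - c • 1‖ + ‖q - p‖ := by
      have : q - c • 1 = (p - c • 1) + (q - p) := by abel
      rw [this]
      exact norm_add_le _ _
    have h3 : |μ - c| ≤ r + m₀ / 2 := by linarith
    rw [abs_le] at h3
    constructor <;> simp only [hc, hr] at h3 ⊢ <;> linarith
  set C : ℝ := max |Real.log (m₀ / 2)| |Real.log (M₀ + m₀ / 2)| with hC
  have hC0 : 0 ≤ C := le_trans (abs_nonneg _) (le_max_left _ _)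
  have keyb : ∀ q : Mat, IsSelfAdjoint q →
      (∀ μ ∈ spectrum ℝ q, m₀ / 2 ≤ μ ∧ μ ≤ M₀ + m₀ / 2) → ‖CFC.log q‖ ≤ C := by
    intro q hq hspec
    refine norm_log_le q hq hC0 fun x hx => ?_
    obtain ⟨h1, h2⟩ := hspec x hx
    have hx0 : (0:ℝ) < m₀ / 2 := by linarith
    have hl1 : Real.log (m₀ / 2) ≤ Real.log x := Real.log_le_log hx0 h1
    have hl2 : Real.log x ≤ Real.log (M₀ + m₀ / 2) :=
      Real.log_le_log (by linarith) h2
    rw [abs_le]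
    constructor
    · calc -C ≤ -|Real.log (m₀ / 2)| := neg_le_neg (le_max_left _ _)
        _ ≤ Real.log (m₀ / 2) := neg_abs_le _
        _ ≤ Real.log x := hl1
    · calc Real.log x ≤ Real.log (M₀ + m₀ / 2) := hl2
        _ ≤ |Real.log (M₀ + m₀ / 2)| := le_abs_self _
        _ ≤ C := le_max_right _ _
  -- eventual bound on the logs
  have hev : ∀ᶠ k in Filter.atTop, ‖CFC.log (Pk k : Mat)‖ ≤ C := by
    have hd : Filter.Tendsto (fun k => ‖(Pk k : Mat) - p‖) Filter.atTop (nhds 0) := by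
      exact tendsto_iff_norm_sub_tendsto_zero.1 hTends
    filter_upwards [hd.eventually_lt_const (by linarith : (0:ℝ) < m₀ / 2)] with k hk
    exact keyb _ (Pk k).2.1 (key2 _ (Pk k).2.1 hk.le)
  -- subsequence argument
  apply Filter.tendsto_of_subseq_tendsto
  intro ns hns
  set B : ℕ → Mat := fun j => CFC.log (Pk (ns j) : Mat) with hB
  have hfreq : ∃ᶠ j in Filter.atTop, B j ∈ Metric.closedBall (0 : Mat) C := by
    refine (hns.eventually hev).mono ?_ |>.frequently
    intro j hj
    exact Metric.mem_closedBall.2 ((dist_zero_right (B j)).trans_le hj)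
  obtain ⟨a, -, φ, hφ, hlim⟩ :=
    tendsto_subseq_of_frequently_bounded Metric.isBounded_closedBall hfreq
  refine ⟨φ, ?_⟩
  have ha_sa : IsSelfAdjoint a := by
    have h1 : Filter.Tendsto (fun j => star (B (φ j))) Filter.atTop (nhds (star a)) :=
      (continuous_star.tendsto a).comp hlim
    have h2 : ∀ j, star (B (φ j)) = B (φ j) := fun j =>
      (IsSelfAdjoint.log : IsSelfAdjoint (CFC.log _)).star_eq
    exact tendsto_nhds_unique (h1.congr h2) hlim
  have hexp : NormedSpace.exp a = p := by
    have h1 : Filter.Tendsto (fun j => NormedSpace.exp (B (φ j))) Filter.atTop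
        (nhds (NormedSpace.exp a)) := (NormedSpace.exp_analytic (𝕂 := ℂ) a).continuousAt.tendsto.comp hlim
    have h2 : ∀ j, NormedSpace.exp (B (φ j)) = (Pk (ns (φ j)) : Mat) := fun j => by
      rw [← exp_c_eq_r]
      exact exp_log_eq (Pk (ns (φ j))).2
    have h3 : Filter.Tendsto (fun j => (Pk (ns (φ j)) : Mat)) Filter.atTop (nhds p) :=
      hTends.comp (hns.comp hφ.tendsto_atTop)
    exact tendsto_nhds_unique (h1.congr h2) h3
  have halog : a = CFC.log p := by
    conv_rhs => rw [← hexp]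
    rw [← exp_c_eq_r]
    exact (log_exp_eq a ha_sa).symm
  have hfin : Filter.Tendsto (B ∘ φ) Filter.atTop (nhds (CFC.log p)) := halog ▸ hlim
  exact hfin

/-- Main construction, with the C*-norm instances in scope. -/
lemma main (hn : 1 ≤ n) :
    ∃ h : {A : Matrix (Fin n) (Fin n) ℂ // A.IsHermitian} ≃ₜ
        {A : Matrix (Fin n) (Fin n) ℂ // A.PosDef},
      ∀ A : {A : Matrix (Fin n) (Fin n) ℂ // A.IsHermitian},
        (h A : Matrix (Fin n) (Fin n) ℂ) = NormedSpace.exp (A : Matrix (Fin n) (Fin n) ℂ) := by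
  refine ⟨{
    toFun := fun A => ⟨NormedSpace.exp (A : Mat), exp_posDef (A : Mat) A.2⟩
    invFun := fun P => ⟨CFC.log (P : Mat), (IsSelfAdjoint.log : IsSelfAdjoint _)⟩
    left_inv := fun A => Subtype.ext (log_exp_eq (A : Mat) A.2)
    right_inv := fun P => Subtype.ext (exp_log_eq P.2)
    continuous_toFun := by
      exact Continuous.subtype_mk
        ((continuous_iff_continuousAt.2 fun x =>
          (NormedSpace.exp_analytic (𝕂 := ℂ) x).continuousAt).comp continuous_subtype_val) _
    continuous_invFun := continuous_log hn }, fun A => rfl⟩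

end
end ExpHomeoAux

/-- **Topological form of the exponential/logarithm correspondence** (Definition 3.3):
there is a homeomorphism from the space of Hermitian `n × n` complex matrices onto the
space of positive definite Hermitian matrices (both with subspace topology) whose
underlying map is the matrix exponential. -/
theorem exp_homeomorph_hermitian_posDef (n : ℕ) (hn : 1 ≤ n) :
    ∃ h : {A : Matrix (Fin n) (Fin n) ℂ // A.IsHermitian} ≃ₜ
        {A : Matrix (Fin n) (Fin n) ℂ // A.PosDef},
      ∀ A : {A : Matrix (Fin n) (Fin n) ℂ // A.IsHermitian},
        (h A : Matrix (Fin n) (Fin n) ℂ) = NormedSpace.exp (A : Matrix (Fin n) (Fin n) ℂ) := by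
  exact ExpHomeoAux.main hn
end

section
/- Let n ≥ 1 and let (T_ν) be a sequence of invertible complex n×n matrices such that the sequence T_ν * (T_ν)ᴴ converges (in the space of matrices) to a positive definite Hermitian matrix P. Then there exist a strictly increasing function φ : ℕ → ℕ and an invertible complex n×n matrix T such that T_{φ(ν)} converges to T. (The compactness step in the proof of Lemma 4.9: properness of the projection GL → GL/U(n) implies that a sequence whose polar parts converge has a convergent subsequence.) -/
open scoped ComplexOrder Matrix Topology

attribute [local instance] Matrix.normedAddCommGroup Matrix.normedSpace

/-- **Compactness step in the proof of Lemma 4.9**: if `(T ν)` is a sequence of invertible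
complex `n × n` matrices such that `T ν * (T ν)ᴴ` converges to a positive definite
Hermitian matrix `P`, then some subsequence of `(T ν)` converges to an invertible matrix. -/
theorem subseq_converges_of_polar_parts_converge (n : ℕ) (hn : 1 ≤ n)
    (T : ℕ → Matrix (Fin n) (Fin n) ℂ) (hT : ∀ ν, IsUnit (T ν).det)
    (P : Matrix (Fin n) (Fin n) ℂ) (hP : P.PosDef)
    (hconv : Filter.Tendsto (fun ν => T ν * (T ν)ᴴ) Filter.atTop (𝓝 P)) :
    ∃ φ : ℕ → ℕ, StrictMono φ ∧
      ∃ L : Matrix (Fin n) (Fin n) ℂ, IsUnit L.det ∧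
        Filter.Tendsto (fun ν => T (φ ν)) Filter.atTop (𝓝 L) := by
  -- step 1: the sequence `T ν` is bounded
  have hnorm : Filter.Tendsto (fun ν => ‖T ν * (T ν)ᴴ‖) Filter.atTop (𝓝 ‖P‖) :=
    hconv.norm
  obtain ⟨M, hM⟩ := hnorm.bddAbove_range
  have hM' : ∀ ν, ‖T ν * (T ν)ᴴ‖ ≤ M := fun ν =>
    hM ⟨ν, rfl⟩
  have hM0 : (0 : ℝ) ≤ M := le_trans (norm_nonneg _) (hM' 0)
  have hbound : ∀ ν, ‖T ν‖ ≤ Real.sqrt M := by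
    intro ν
    rw [Matrix.norm_le_iff (Real.sqrt_nonneg M)]
    intro i j
    have hdiag : (T ν * (T ν)ᴴ) i i = ((∑ k, Complex.normSq (T ν i k) : ℝ) : ℂ) := by
      simp [Matrix.mul_apply, Matrix.conjTranspose_apply, Complex.mul_conj]
    have h1 : ‖T ν i j‖ ^ 2 ≤ ‖(T ν * (T ν)ᴴ) i i‖ := by
      rw [hdiag, Complex.norm_real, Real.norm_of_nonneg
        (Finset.sum_nonneg fun k _ => Complex.normSq_nonneg _)]
      have := Finset.single_le_sum (f := fun k => Complex.normSq (T ν i k))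
        (fun k _ => Complex.normSq_nonneg _) (Finset.mem_univ j)
      simpa [Complex.normSq_eq_norm_sq] using this
    have h2 : ‖(T ν * (T ν)ᴴ) i i‖ ≤ M :=
      le_trans (Matrix.norm_entry_le_entrywise_sup_norm _) (hM' ν)
    have h3 : ‖T ν i j‖ ^ 2 ≤ M := le_trans h1 h2
    have := Real.sqrt_le_sqrt h3
    rwa [Real.sqrt_sq (norm_nonneg _)] at this
  -- step 2: extract a convergent subsequence by compactness of the closed ball
  have hcompact : IsCompact (Metric.closedBall (0 : Matrix (Fin n) (Fin n) ℂ)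
      (Real.sqrt M)) := isCompact_closedBall _ _
  have hmem : ∀ ν, T ν ∈ Metric.closedBall (0 : Matrix (Fin n) (Fin n) ℂ)
      (Real.sqrt M) := fun ν => by
    simpa [Metric.mem_closedBall, dist_zero_right] using hbound ν
  haveI : FirstCountableTopology (Matrix (Fin n) (Fin n) ℂ) :=
    inferInstanceAs (FirstCountableTopology (Fin n → Fin n → ℂ))
  obtain ⟨L, -, φ, hφ, hLtendsto⟩ := hcompact.tendsto_subseq hmem
  refine ⟨φ, hφ, L, ?_, hLtendsto⟩
  -- step 3: the limit satisfies `L * Lᴴ = P`, hence is invertible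
  have hcontmul : Continuous fun X : Matrix (Fin n) (Fin n) ℂ => X * Xᴴ :=
    continuous_id.matrix_mul continuous_id.matrix_conjTranspose
  have h1 : Filter.Tendsto (fun ν => T (φ ν) * (T (φ ν))ᴴ) Filter.atTop (𝓝 (L * Lᴴ)) :=
    (hcontmul.tendsto L).comp hLtendsto
  have h2 : Filter.Tendsto (fun ν => T (φ ν) * (T (φ ν))ᴴ) Filter.atTop (𝓝 P) :=
    hconv.comp hφ.tendsto_atTop
  have hLL : L * Lᴴ = P := tendsto_nhds_unique h1 h2
  have hdetP : P.det ≠ 0 := hP.det_pos.ne'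
  have : L.det * star L.det ≠ 0 := by
    rw [← Matrix.det_conjTranspose, ← Matrix.det_mul, hLL]; exact hdetP
  exact isUnit_iff_ne_zero.mpr (left_ne_zero_of_mul this)
end

section
/- Let (t_n) be a sequence of nonzero complex numbers with t_n → 0, and for each n let g_n : ℂ → ℂ be complex differentiable on the closed annulus {z ∈ ℂ : |t_n| ≤ |z| ≤ 1}. Let A = {z ∈ ℂ : 1/2 ≤ |z| ≤ 1}. Suppose the sequence (g_n) converges uniformly on A to the zero function, and the sequence of functions w ↦ g_n(t_n / w) converges uniformly on A to the zero function. Then the sup-norms of g_n on the full annuli tend to zero: for every ε > 0 there exists N such that for all n ≥ N and all z with |t_n| ≤ |z| ≤ 1 one has |g_n(z)| ≤ ε. (The last assertion of Lemma B.8, proved via the maximum principle on each annulus.) -/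
open Complex

/-- **Last assertion of Lemma B.8**: if `g n` is holomorphic on the annulus
`|t n| ≤ |z| ≤ 1` with `t n → 0`, and both `g n` and `w ↦ g n (t n / w)` converge
uniformly to `0` on `A = {1/2 ≤ |z| ≤ 1}`, then the sup-norms of `g n` on the full
annuli tend to zero (via the maximum principle). -/
theorem degenerating_annuli_sup_norm_to_zero
    (t : ℕ → ℂ) (ht0 : ∀ n, t n ≠ 0) (htlim : Filter.Tendsto t Filter.atTop (nhds 0))
    (g : ℕ → ℂ → ℂ)
    (hg : ∀ n, DifferentiableOn ℂ (g n) {z : ℂ | ‖t n‖ ≤ ‖z‖ ∧ ‖z‖ ≤ 1})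
    (hF : TendstoUniformlyOn g 0 Filter.atTop
      {z : ℂ | 1/2 ≤ ‖z‖ ∧ ‖z‖ ≤ 1})
    (hG : TendstoUniformlyOn (fun n w => g n (t n / w)) 0 Filter.atTop
      {z : ℂ | 1/2 ≤ ‖z‖ ∧ ‖z‖ ≤ 1}) :
    ∀ ε > (0 : ℝ), ∃ N : ℕ, ∀ n ≥ N, ∀ z : ℂ,
      ‖t n‖ ≤ ‖z‖ → ‖z‖ ≤ 1 →
        ‖g n z‖ ≤ ε := by
  intro ε hε
  have hU1 := (Metric.tendstoUniformlyOn_iff.mp hF) ε hε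
  have hU2 := (Metric.tendstoUniformlyOn_iff.mp hG) ε hε
  have htsmall : ∀ᶠ n in Filter.atTop, ‖t n‖ < 1/2 := by
    have := Metric.tendsto_nhds.mp htlim (1/2) (by norm_num)
    filter_upwards [this] with n hn
    simpa [Complex.dist_eq] using hn
  obtain ⟨N, hN⟩ := Filter.eventually_atTop.mp ((htsmall.and hU1).and hU2)
  refine ⟨N, fun n hn z hz1 hz2 => ?_⟩
  obtain ⟨⟨hts, hb1⟩, hb2⟩ := hN n hn
  set s : Set ℂ := {z : ℂ | ‖t n‖ ≤ ‖z‖ ∧ ‖z‖ ≤ 1} with hs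
  have hclosed : IsClosed s := by
    have : s = (fun z => ‖z‖) ⁻¹' (Set.Icc (‖t n‖) 1) := by
      ext w; simp [hs, Set.mem_Icc]
    rw [this]
    exact isClosed_Icc.preimage continuous_norm
  have hbdd : Bornology.IsBounded s := by
    apply (Metric.isBounded_closedBall (x := (0:ℂ)) (r := 1)).subset
    intro w hw
    simpa [Metric.mem_closedBall, Complex.dist_eq] using hw.2
  have key : ‖g n z‖ ≤ ε := by
    apply Complex.norm_le_of_forall_mem_frontier_norm_le hbdd
    · exact DifferentiableOn.diffContOnCl (by rw [hclosed.closure_eq]; exact hg n)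
    · intro w hw
      rw [hclosed.frontier_eq] at hw
      obtain ⟨hws, hwi⟩ := hw
      have hbd : ‖w‖ = ‖t n‖ ∨ ‖w‖ = 1 := by
        by_contra h
        push_neg at h
        have h1 : ‖t n‖ < ‖w‖ := lt_of_le_of_ne hws.1 (Ne.symm h.1)
        have h2 : ‖w‖ < 1 := lt_of_le_of_ne hws.2 h.2
        apply hwi
        have hopen : IsOpen {u : ℂ | ‖t n‖ < ‖u‖ ∧ ‖u‖ < 1} := by
          have : {u : ℂ | ‖t n‖ < ‖u‖ ∧ ‖u‖ < 1}
              = (fun u => ‖u‖) ⁻¹' (Set.Ioo (‖t n‖) 1) := by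
            ext u; simp [Set.mem_Ioo]
          rw [this]
          exact isOpen_Ioo.preimage continuous_norm
        have hsub : {u : ℂ | ‖t n‖ < ‖u‖ ∧ ‖u‖ < 1} ⊆ s :=
          fun u hu => ⟨hu.1.le, hu.2.le⟩
        exact interior_maximal hsub hopen ⟨h1, h2⟩
      rcases hbd with hbd | hbd
      · -- inner circle: use hG
        have hw0 : w ≠ 0 := by
          intro h
          apply ht0 n
          rw [h, norm_zero] at hbd
          exact norm_eq_zero.mp hbd.symm
        set u := t n / w with hu
        have hau : ‖u‖ = 1 := by
          rw [hu, norm_div, ← hbd, div_self]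
          exact norm_ne_zero_iff.mpr hw0
        have huA : u ∈ {z : ℂ | 1/2 ≤ ‖z‖ ∧ ‖z‖ ≤ 1} := by
          rw [Set.mem_setOf_eq, hau]; norm_num
        have := hb2 u huA
        have heq : t n / u = w := by
          rw [hu]; field_simp
          exact div_self (ht0 n)
        rw [heq] at this
        simpa using this.le
      · have hwA : w ∈ {z : ℂ | 1/2 ≤ ‖z‖ ∧ ‖z‖ ≤ 1} := by
          rw [Set.mem_setOf_eq, hbd]; norm_num
        have := hb1 w hwA
        simpa using this.le
    · rw [hclosed.closure_eq]; exact ⟨hz1, hz2⟩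
  simpa using key
end

section
/- Let z₀ ∈ ℂ with |z₀| < 1, let U ⊆ ℂ be an open set containing the closed unit disc, and let ψ : ℂ → ℂ be complex differentiable on U with ψ(z) ≠ 0 for every z in the closed unit disc. Define φ : ℂ → ℂ by φ(z) = (z − z₀) · ψ(z). Then the circle integral over the unit circle satisfies ∮_{|ζ|=1} ζ · φ'(ζ)/φ(ζ) dζ = 2πi · z₀. (The residue-theorem formula, used in the proof of Proposition 5.5, expressing the unique simple zero of a holomorphic function inside the unit disc as a contour integral.) -/
open Complex

open Metric

/-- **Residue-theorem formula from the proof of Proposition 5.5**: if `φ(z) = (z - z₀)ψ(z)`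
with `ψ` holomorphic and nonvanishing on the closed unit disc and `|z₀| < 1`, then the
contour integral `∮_{|ζ|=1} ζ φ'(ζ)/φ(ζ) dζ` recovers the zero: it equals `2πi·z₀`. -/
theorem circleIntegral_zero_counting (z₀ : ℂ) (hz₀ : ‖z₀‖ < 1)
    (U : Set ℂ) (hU : IsOpen U) (hUball : Metric.closedBall (0 : ℂ) 1 ⊆ U)
    (ψ : ℂ → ℂ) (hψ : DifferentiableOn ℂ ψ U)
    (hψ0 : ∀ z ∈ Metric.closedBall (0 : ℂ) 1, ψ z ≠ 0)
    (φ : ℂ → ℂ) (hφ : ∀ z : ℂ, φ z = (z - z₀) * ψ z) :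
    circleIntegral (fun ζ => ζ * deriv φ ζ / φ ζ) 0 1 = 2 * Real.pi * Complex.I * z₀ := by
  have hψa : AnalyticOnNhd ℂ ψ U := hψ.analyticOnNhd hU
  have hψd : ∀ z ∈ U, DifferentiableAt ℂ ψ z := fun z hz => (hψa z hz).differentiableAt
  have hψ'c : ContinuousOn (deriv ψ) U := fun z hz =>
    ((hψa.deriv z hz).differentiableAt.continuousAt).continuousWithinAt
  have hψ'd : ∀ z ∈ U, DifferentiableAt ℂ (deriv ψ) z := fun z hz =>
    (hψa.deriv z hz).differentiableAt
  -- derivative of φ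
  have hder : ∀ z ∈ U, deriv φ z = ψ z + (z - z₀) * deriv ψ z := by
    intro z hz
    have h1 : HasDerivAt (fun w => (w - z₀) * ψ w) (1 * ψ z + (z - z₀) * deriv ψ z) z :=
      ((hasDerivAt_id z).sub_const z₀).mul (hψd z hz).hasDerivAt
    have : HasDerivAt φ (1 * ψ z + (z - z₀) * deriv ψ z) z := by
      simpa [funext hφ] using h1
    simpa using this.deriv
  have hne : ∀ ζ ∈ sphere (0:ℂ) 1, ζ - z₀ ≠ 0 := by
    intro ζ hζ h
    rw [sub_eq_zero] at h
    rw [mem_sphere_zero_iff_norm, h] at hζ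
    rw [hζ] at hz₀
    exact lt_irrefl _ hz₀
  -- pointwise identity on the circle
  have key : ∀ ζ ∈ sphere (0 : ℂ) 1,
      ζ * deriv φ ζ / φ ζ = (ζ - z₀)⁻¹ * ζ + ζ * deriv ψ ζ / ψ ζ := by
    intro ζ hζ
    have hζU : ζ ∈ U := hUball (sphere_subset_closedBall hζ)
    have hζψ : ψ ζ ≠ 0 := hψ0 ζ (sphere_subset_closedBall hζ)
    have hζz : ζ - z₀ ≠ 0 := hne ζ hζ
    rw [hder ζ hζU, hφ ζ]
    field_simp
  -- integrability & splitting
  have hInt := circleIntegral.integral_congr (by norm_num : (0:ℝ) ≤ 1) key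
  rw [hInt]
  have hsub : sphere (0:ℂ) 1 ⊆ U := fun z hz => hUball (sphere_subset_closedBall hz)
  have hc1 : CircleIntegrable (fun ζ => (ζ - z₀)⁻¹ * ζ) 0 1 := by
    apply ContinuousOn.circleIntegrable (by norm_num)
    exact ((continuousOn_id.sub continuousOn_const).inv₀ (fun w hw => hne w hw)).mul continuousOn_id
  have hc2 : CircleIntegrable (fun ζ => ζ * deriv ψ ζ / ψ ζ) 0 1 := by
    apply ContinuousOn.circleIntegrable (by norm_num)
    exact ((continuousOn_id.mul (hψ'c.mono hsub)).div
      (hψ.continuousOn.mono hsub) fun z hz => hψ0 z (sphere_subset_closedBall hz))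
  have hsplit := circleIntegral.integral_sub (hc1.add hc2) hc2
  have heq : (fun z : ℂ => ((z - z₀)⁻¹ * z + z * deriv ψ z / ψ z) - z * deriv ψ z / ψ z)
      = fun z : ℂ => (z - z₀)⁻¹ * z := by funext z; ring
  simp only [Pi.add_apply] at hsplit
  rw [heq] at hsplit
  -- first integral by Cauchy formula
  have h1 : circleIntegral (fun ζ => (ζ - z₀)⁻¹ * ζ) 0 1 = 2 * Real.pi * Complex.I * z₀ := by
    have hd : DiffContOnCl ℂ (fun z : ℂ => z) (ball (0:ℂ) 1) :=
      (differentiable_id).diffContOnCl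
    have := hd.circleIntegral_sub_inv_smul (w := z₀) (by simpa using hz₀)
    simpa [smul_eq_mul] using this
  -- second integral is zero by Cauchy–Goursat
  have h2 : circleIntegral (fun ζ => ζ * deriv ψ ζ / ψ ζ) 0 1 = 0 := by
    apply circleIntegral_eq_zero_of_differentiable_on_off_countable (by norm_num)
      (Set.countable_empty)
    · exact (continuousOn_id.mul (hψ'c.mono hUball)).div
        (hψ.continuousOn.mono hUball) hψ0
    · intro z hz
      have hzU : z ∈ U := hUball (ball_subset_closedBall hz.1)
      exact (differentiableAt_id.mul (hψ'd z hzU)).div (hψd z hzU)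
        (hψ0 z (ball_subset_closedBall hz.1))
  have : circleIntegral (fun z : ℂ => (z - z₀)⁻¹ * z + z * deriv ψ z / ψ z) 0 1
      = circleIntegral (fun z : ℂ => (z - z₀)⁻¹ * z) 0 1
        + circleIntegral (fun z : ℂ => z * deriv ψ z / ψ z) 0 1 := by
    rw [hsplit]; ring
  rw [this, h1, h2, add_zero]
end

section
/- There exists a function L : ℂ × ℂ × ℂ → ℂ which is complex differentiable on the open set S = {(w, ξ₁, ξ₂) : 1/2 < |w| < 1, |ξ₁| < 1/2, |ξ₂| < 1/2}, such that exp(L(w, ξ₁, ξ₂)) = (w − ξ₁)/(w − ξ₂) for every (w, ξ₁, ξ₂) ∈ S, and L(w, ξ, ξ) = 0 whenever (w, ξ, ξ) ∈ S. (The holomorphic logarithm with parameters constructed in the proof of Lemma A.7, which exists because the function (w − ξ₁)/(w − ξ₂) has winding number zero on the annulus.) -/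
open Complex

lemma aux_slit {w ξ : ℂ} (hw : 1/2 < ‖w‖) (hξ : ‖ξ‖ < 1/2) :
    (1 - ξ / w) ∈ Complex.slitPlane := by
  rw [Complex.mem_slitPlane_iff]
  left
  have h1 : ‖ξ / w‖ < 1 := by
    rw [norm_div]
    exact (div_lt_one (by linarith)).2 (hξ.trans hw)
  have h2 : (ξ / w).re ≤ ‖ξ / w‖ := Complex.re_le_norm _
  simp only [Complex.sub_re, Complex.one_re]
  linarith

/-- **Holomorphic logarithm with parameters from the proof of Lemma A.7**: on the region
`S = {(w, ξ₁, ξ₂) : 1/2 < |w| < 1, |ξ₁| < 1/2, |ξ₂| < 1/2}` there is a holomorphic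
function `L` with `exp (L (w, ξ₁, ξ₂)) = (w - ξ₁)/(w - ξ₂)` which vanishes whenever
`ξ₁ = ξ₂`. -/
theorem exists_holomorphic_log_with_parameters :
    ∃ L : ℂ × ℂ × ℂ → ℂ,
      DifferentiableOn ℂ L
        {p : ℂ × ℂ × ℂ | 1/2 < ‖p.1‖ ∧ ‖p.1‖ < 1 ∧
          ‖p.2.1‖ < 1/2 ∧ ‖p.2.2‖ < 1/2} ∧
      (∀ w ξ₁ ξ₂ : ℂ, 1/2 < ‖w‖ → ‖w‖ < 1 →
        ‖ξ₁‖ < 1/2 → ‖ξ₂‖ < 1/2 →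
          Complex.exp (L (w, ξ₁, ξ₂)) = (w - ξ₁) / (w - ξ₂)) ∧
      (∀ w ξ : ℂ, 1/2 < ‖w‖ → ‖w‖ < 1 → ‖ξ‖ < 1/2 →
        L (w, ξ, ξ) = 0) := by
  refine ⟨fun p => Complex.log (1 - p.2.1 / p.1) - Complex.log (1 - p.2.2 / p.1), ?_, ?_, ?_⟩
  · intro p hp
    obtain ⟨h1, _, h3, h4⟩ := hp
    have hw0 : p.1 ≠ 0 := by
      intro h; rw [h] at h1; simp at h1; linarith
    have hfst : DifferentiableAt ℂ (fun q : ℂ × ℂ × ℂ => q.1) p := differentiableAt_fst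
    have ha : DifferentiableAt ℂ (fun q : ℂ × ℂ × ℂ => q.2.1) p :=
      differentiableAt_snd.fst
    have hb : DifferentiableAt ℂ (fun q : ℂ × ℂ × ℂ => q.2.2) p :=
      differentiableAt_snd.snd
    have hd1 : DifferentiableAt ℂ (fun q : ℂ × ℂ × ℂ => 1 - q.2.1 / q.1) p := by
      simp only [div_eq_mul_inv]
      exact (differentiableAt_const 1).sub (ha.mul (hfst.inv hw0))
    have hd2 : DifferentiableAt ℂ (fun q : ℂ × ℂ × ℂ => 1 - q.2.2 / q.1) p := by
      simp only [div_eq_mul_inv]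
      exact (differentiableAt_const 1).sub (hb.mul (hfst.inv hw0))
    exact ((hd1.clog (aux_slit h1 h3)).sub (hd2.clog (aux_slit h1 h4))).differentiableWithinAt
  · intro w ξ₁ ξ₂ hw1 hw2 h1 h2
    have hw0 : w ≠ 0 := by
      intro h; rw [h] at hw1; simp at hw1; linarith
    have ha : (1 - ξ₁ / w) ≠ 0 := Complex.slitPlane_ne_zero (aux_slit hw1 h1)
    have hb : (1 - ξ₂ / w) ≠ 0 := Complex.slitPlane_ne_zero (aux_slit hw1 h2)
    simp only [Complex.exp_sub, Complex.exp_log ha, Complex.exp_log hb]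
    field_simp
  · intro w ξ hw1 hw2 hξ
    simp
end
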